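/- Let h : ℝ² → ℝ be continuous and satisfy conditions (h1)–(h4). Then the rotation number function is surjective on h-minimal configurations: for every α ∈ ℝ there exists an h-minimal configuration x = (x_i)_{i∈ℤ} with lim_{n→+∞} x_n/n = α. -/

import Mathlib

open Filter Topology MeasureTheory

/-- The finite segment of `x` between indices `j` and `k` is `h`-minimal. -/
def IsMinSegment (h : ℝ → ℝ → ℝ) (j k : ℤ) (x : ℤ → ℝ) : Prop :=
  ∀ y : ℤ → ℝ, y j = x j → y k = x k →
    ∑ i ∈ Finset.Ico j k, h (x i) (x (i + 1)) ≤ ∑ i ∈ Finset.Ico j k, h (y i) (y (i + 1))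

/-- A bi-infinite configuration is `h`-minimal if every finite segment of it is minimal. -/
def MinimalConfig (h : ℝ → ℝ → ℝ) (x : ℤ → ℝ) : Prop :=
  ∀ j k : ℤ, j < k → IsMinSegment h j k x

/-- The segment `(a, b, c)` is `h`-minimal (endpoints `a`, `c` fixed, middle point varies). -/
def MinTriple (h : ℝ → ℝ → ℝ) (a b c : ℝ) : Prop :=
  ∀ m : ℝ, h a b + h b c ≤ h a m + h m c

/-- Condition (h1): periodicity. -/
def CondH1 (h : ℝ → ℝ → ℝ) : Prop := ∀ x x' : ℝ, h (x + 1) (x' + 1) = h x x'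

/-- Condition (h2): `h (x, x+ξ) → +∞` as `|ξ| → ∞`, uniformly in `x`. -/
def CondH2 (h : ℝ → ℝ → ℝ) : Prop :=
  ∀ M : ℝ, ∃ R : ℝ, ∀ x ξ : ℝ, R ≤ |ξ| → M ≤ h x (x + ξ)

/-- Condition (h3). -/
def CondH3 (h : ℝ → ℝ → ℝ) : Prop :=
  ∀ x ξ x' ξ' : ℝ, x < ξ → x' < ξ' → h x x' + h ξ ξ' < h x ξ' + h ξ x'

/-- Condition (h4). -/
def CondH4 (h : ℝ → ℝ → ℝ) : Prop :=
  ∀ xb x x' ξb ξ' : ℝ, MinTriple h xb x x' → MinTriple h ξb x ξ' →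
    (xb ≠ ξb ∨ x' ≠ ξ') → (xb - ξb) * (x' - ξ') < 0

/-- Condition (h5). -/
def CondH5 (h : ℝ → ℝ → ℝ) : Prop :=
  ∃ ρ : ℝ → ℝ → ℝ, Continuous (Function.uncurry ρ) ∧ (∀ s s' : ℝ, 0 < ρ s s') ∧
    ∀ x ξ x' ξ' : ℝ, x < ξ → x' < ξ' →
      (∫ s in x..ξ, ∫ s' in x'..ξ', ρ s s') ≤ h x ξ' + h ξ x' - h x x' - h ξ ξ'

/-- Condition (h6θ). -/
def CondH6 (θ : ℝ) (h : ℝ → ℝ → ℝ) : Prop :=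
  (∀ x' : ℝ, ConvexOn ℝ Set.univ fun x => θ * (x - x') ^ 2 / 2 - h x x') ∧
  (∀ x : ℝ, ConvexOn ℝ Set.univ fun x' => θ * (x' - x) ^ 2 / 2 - h x x')


namespace Bangert

variable {h : ℝ → ℝ → ℝ}

lemma h1Z (h1 : CondH1 h) : ∀ (n : ℤ) (x x' : ℝ), h (x + n) (x' + n) = h x x' := by
  intro n
  induction n using Int.induction_on with
  | zero => simp
  | succ k ih =>
    intro x x'
    have e1 : (x + ((k:ℤ) + 1 : ℤ)) = (x + (k:ℤ)) + 1 := by push_cast; ring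
    have e2 : (x' + ((k:ℤ) + 1 : ℤ)) = (x' + (k:ℤ)) + 1 := by push_cast; ring
    rw [e1, e2, h1, ih]
  | pred k ih =>
    intro x x'
    have e0 : h (x + (-(k:ℤ) : ℤ)) (x' + (-(k:ℤ) : ℤ)) = h x x' := ih x x'
    have e1 : (x + (-(k:ℤ) : ℤ)) = (x + (-(k:ℤ)-1 : ℤ)) + 1 := by push_cast; ring
    have e2 : (x' + (-(k:ℤ) : ℤ)) = (x' + (-(k:ℤ)-1 : ℤ)) + 1 := by push_cast; ring
    rw [e1, e2, h1] at e0
    exact e0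

/-- h is bounded below -/
lemma lower_bound (hcont : Continuous (Function.uncurry h)) (h1 : CondH1 h) (h2 : CondH2 h) :
    ∃ c : ℝ, ∀ a b : ℝ, c ≤ h a b := by
  obtain ⟨R, hR⟩ := h2 0
  set g : ℝ × ℝ → ℝ := fun pr => h pr.1 (pr.1 + pr.2) with hg
  have hgc : Continuous g := by
    have : g = Function.uncurry h ∘ (fun pr : ℝ × ℝ => (pr.1, pr.1 + pr.2)) := rfl
    rw [this]
    exact hcont.comp (continuous_fst.prodMk (continuous_fst.add continuous_snd))
  have hK : IsCompact (Set.Icc ((0:ℝ),(-|R|-1)) (1, |R|+1)) := isCompact_Icc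
  have habs : (0:ℝ) ≤ |R| := abs_nonneg R
  have hne : (Set.Icc ((0:ℝ),(-|R|-1)) (1, |R|+1)).Nonempty := by
    refine ⟨(0, 0), ?_⟩
    simp only [Set.mem_Icc, Prod.le_def]
    refine ⟨⟨le_refl _, by linarith⟩, ⟨zero_le_one, by linarith⟩⟩
  obtain ⟨z, hz, hzmin⟩ := hK.exists_isMinOn hne hgc.continuousOn
  refine ⟨min (g z) 0, ?_⟩
  intro a b
  have key : h a b = h (a - ⌊a⌋) (b - ⌊a⌋) := by
    have := h1Z h1 (⌊a⌋) (a - ⌊a⌋) (b - ⌊a⌋)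
    rw [sub_add_cancel, sub_add_cancel] at this
    exact this
  rw [key]
  set a' := a - (⌊a⌋:ℝ) with ha'
  set ξ := b - a with hξ
  have hb : b - (⌊a⌋:ℝ) = a' + ξ := by rw [ha', hξ]; ring
  rw [hb]
  rcases le_or_gt (|R|+1) |ξ| with hcase | hcase
  · have := hR a' ξ (le_trans (le_trans (le_abs_self R) (by linarith)) hcase)
    exact le_trans (min_le_right _ _) this
  · have hfl := Int.floor_le a
    have hfl2 := Int.lt_floor_add_one a
    have : (a', ξ) ∈ Set.Icc ((0:ℝ),(-|R|-1)) (1, |R|+1) := by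
      simp only [Set.mem_Icc, Prod.le_def]
      refine ⟨⟨by rw [ha']; linarith, ?_⟩, ⟨by rw [ha']; linarith, ?_⟩⟩
      · have := neg_abs_le ξ; linarith
      · have := le_abs_self ξ; linarith
    exact le_trans (min_le_left _ _) (hzmin this)


/-- (p,q)-periodic configuration -/
def Per (p : ℤ) (q : ℕ) (x : ℤ → ℝ) : Prop := ∀ i : ℤ, x (i + q) = x i + p

/-- action over window [t, t+q) -/
noncomputable def act (h : ℝ → ℝ → ℝ) (q : ℕ) (t : ℤ) (x : ℤ → ℝ) : ℝ :=
  ∑ i ∈ Finset.Ico t (t + q), h (x i) (x (i + 1))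

lemma per_shift {p : ℤ} {q : ℕ} {x : ℤ → ℝ} (hx : Per p q x) :
    ∀ (t i : ℤ), x (i + t * q) = x i + t * p := by
  intro t
  induction t using Int.induction_on with
  | zero => simp
  | succ k ih =>
    intro i
    have : i + (k + 1) * q = (i + k * q) + q := by ring
    rw [this, hx, ih]; push_cast; ring
  | pred k ih =>
    intro i
    have e : x (i + (-k - 1) * q + q) = x (i + (-k-1) * q) + p := hx _
    have e2 : i + (-k - 1) * q + q = i + (-k : ℤ) * q := by ring
    rw [e2] at e
    rw [ih] at e
    push_cast at e ⊢
    linarith [e]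

lemma sum_Ico_top (f : ℤ → ℝ) {a b : ℤ} (hab : a ≤ b) :
    ∑ i ∈ Finset.Ico a (b+1), f i = (∑ i ∈ Finset.Ico a b, f i) + f b := by
  have : Finset.Ico a (b+1) = insert b (Finset.Ico a b) := by
    ext i; simp only [Finset.mem_Ico, Finset.mem_insert]; omega
  rw [this, Finset.sum_insert (by simp)]
  ring

lemma sum_Ico_bot (f : ℤ → ℝ) {a b : ℤ} (hab : a < b) :
    ∑ i ∈ Finset.Ico a b, f i = f a + ∑ i ∈ Finset.Ico (a+1) b, f i := by
  have : Finset.Ico a b = insert a (Finset.Ico (a+1) b) := by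
    ext i; simp only [Finset.mem_Ico, Finset.mem_insert]; omega
  rw [this, Finset.sum_insert (by simp)]

lemma bond_per {p : ℤ} {q : ℕ} {x : ℤ → ℝ} (h1 : CondH1 h) (hx : Per p q x) (i : ℤ) :
    h (x (i + q)) (x (i + q + 1)) = h (x i) (x (i + 1)) := by
  have e1 : x (i + q) = x i + p := hx i
  have e2 : x (i + q + 1) = x (i + 1) + p := by
    rw [show i + (q:ℤ) + 1 = (i + 1) + q by ring, hx]
  rw [e1, e2, h1Z h1]

lemma act_window {p : ℤ} {q : ℕ} {x : ℤ → ℝ} (h1 : CondH1 h) (hx : Per p q x) :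
    ∀ t : ℤ, act h q t x = act h q 0 x := by
  have step : ∀ t : ℤ, act h q (t + 1) x = act h q t x := by
    intro t
    unfold act
    have hle : t ≤ t + q := by omega
    have e1 : ∑ i ∈ Finset.Ico t (t + q + 1), h (x i) (x (i+1))
        = (∑ i ∈ Finset.Ico t (t + q), h (x i) (x (i+1))) + h (x (t+q)) (x (t+q+1)) :=
      sum_Ico_top (fun i => h (x i) (x (i+1))) hle
    have e2 : ∑ i ∈ Finset.Ico t (t + q + 1), h (x i) (x (i+1))
        = h (x t) (x (t+1)) + ∑ i ∈ Finset.Ico (t+1) (t + q + 1), h (x i) (x (i+1)) :=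
      sum_Ico_bot (fun i => h (x i) (x (i+1))) (show t < t + q + 1 by omega)
    have e3 : t + 1 + (q:ℤ) = t + q + 1 := by ring
    rw [e3]
    have := bond_per h1 hx t
    rw [this] at e1
    linarith [e1, e2]
  intro t
  induction t using Int.induction_on with
  | zero => rfl
  | succ k ih => rw [step, ih]
  | pred k ih =>
    have hs := step (-(k:ℤ) - 1)
    rw [show (-(k:ℤ) - 1) + 1 = -k by ring] at hs
    rw [← hs]
    exact ih

/-- integer translation invariance of the action -/
lemma act_translate (h1 : CondH1 h) (q : ℕ) (t : ℤ) (x : ℤ → ℝ) (n : ℤ) :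
    act h q t (fun i => x i + n) = act h q t x := by
  unfold act
  apply Finset.sum_congr rfl
  intro i _
  exact h1Z h1 n _ _

/-- sum of coordinates over shifted window -/
lemma coord_sum_shift {p : ℤ} {q : ℕ} {x : ℤ → ℝ} (hx : Per p q x) :
    ∀ t : ℤ, ∑ i ∈ Finset.Ico t (t + (q:ℤ)), x i = (∑ i ∈ Finset.Ico 0 (q:ℤ), x i) + t * p := by
  have step : ∀ t : ℤ, ∑ i ∈ Finset.Ico (t+1) (t + 1 + (q:ℤ)), x i
      = (∑ i ∈ Finset.Ico t (t + (q:ℤ)), x i) + p := by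
    intro t
    have e1 : ∑ i ∈ Finset.Ico t (t + q + 1), x i
        = (∑ i ∈ Finset.Ico t (t + q), x i) + x (t+q) := sum_Ico_top x (show t ≤ t + (q:ℤ) by omega)
    have e2 : ∑ i ∈ Finset.Ico t (t + q + 1), x i
        = x t + ∑ i ∈ Finset.Ico (t+1) (t + q + 1), x i :=
      sum_Ico_bot x (show t < t + q + 1 by omega)
    rw [show t + 1 + (q:ℤ) = t + q + 1 by ring]
    have := hx t
    linarith [e1, e2]
  intro t
  induction t using Int.induction_on with
  | zero => simp
  | succ k ih => rw [step, ih]; push_cast; ring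
  | pred k ih =>
    have hs := step (-(k:ℤ) - 1)
    rw [show (-(k:ℤ) - 1) + 1 = -k by ring] at hs
    rw [ih] at hs
    push_cast at hs ⊢
    linarith [hs]


lemma act_continuous (hcont : Continuous (Function.uncurry h)) (q : ℕ) (t : ℤ) :
    Continuous (fun x : ℤ → ℝ => act h q t x) := by
  show Continuous fun x : ℤ → ℝ => ∑ i ∈ Finset.Ico t (t + (q:ℤ)), h (x i) (x (i+1))
  refine continuous_finset_sum (Finset.Ico t (t + (q:ℤ))) (fun i _ => ?_)
  have hai : Continuous (fun x : ℤ → ℝ => (x i, x (i+1))) :=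
    (continuous_apply i).prodMk (continuous_apply (i+1))
  exact hcont.comp hai

lemma lin_per (p : ℤ) (q : ℕ) (hq : 0 < q) :
    Per p q (fun i : ℤ => (i : ℝ) * p / q) := by
  intro i
  have hq0 : (q:ℝ) ≠ 0 := by positivity
  push_cast
  field_simp

lemma exists_per_min (hcont : Continuous (Function.uncurry h)) (h1 : CondH1 h) (h2 : CondH2 h)
    (p : ℤ) (q : ℕ) (hq : 0 < q) :
    ∃ x : ℤ → ℝ, Per p q x ∧ x 0 ∈ Set.Icc (0:ℝ) 1 ∧
      ∀ y, Per p q y → act h q 0 x ≤ act h q 0 y := by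
  obtain ⟨c, hc⟩ := lower_bound hcont h1 h2
  have hq0 : (q:ℝ) ≠ 0 := by positivity
  set lin : ℤ → ℝ := fun i : ℤ => (i : ℝ) * p / q with hlin
  have hlinper : Per p q lin := lin_per p q hq
  set L : ℝ := act h q 0 lin with hL
  set M : ℝ := L - ((q:ℝ) - 1) * c + 1 with hM
  obtain ⟨R, hR⟩ := h2 M
  set B : ℝ := |R| + 1 with hB
  have hB1 : 1 ≤ B := by rw [hB]; linarith [abs_nonneg R]
  have hBR : R ≤ B := le_trans (le_abs_self R) (by rw [hB]; linarith)
  set D : ℝ := (q:ℝ) * B + 1 + |(p:ℝ)| with hD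
  have hD0 : 0 ≤ D := by
    rw [hD]
    have h1' := abs_nonneg ((p:ℝ))
    have h2' : (0:ℝ) ≤ (q:ℝ) * B := mul_nonneg (Nat.cast_nonneg q) (by linarith)
    linarith
  set S : Set (ℤ → ℝ) := {x | Per p q x ∧ x 0 ∈ Set.Icc (0:ℝ) 1 ∧
    ∀ i, x i ∈ Set.Icc (lin i - D) (lin i + D)} with hS
  -- compactness of S
  have hTc : IsCompact {x : ℤ → ℝ | ∀ i, x i ∈ Set.Icc (lin i - D) (lin i + D)} := by
    have hcp := isCompact_univ_pi (fun i : ℤ => (isCompact_Icc (a := lin i - D) (b := lin i + D)))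
    have : {x : ℤ → ℝ | ∀ i, x i ∈ Set.Icc (lin i - D) (lin i + D)}
        = Set.univ.pi (fun i : ℤ => Set.Icc (lin i - D) (lin i + D)) := by
      ext x
      rw [Set.mem_univ_pi]
      rfl
    rw [this]
    exact hcp
  have hScl : IsClosed S := by
    have c1 : IsClosed {x : ℤ → ℝ | Per p q x} := by
      have : {x : ℤ → ℝ | Per p q x} = ⋂ i : ℤ, {x : ℤ → ℝ | x (i + (q:ℤ)) = x i + (p:ℝ)} := by
        ext x; simp [Per, Set.mem_iInter]
      rw [this]
      exact isClosed_iInter fun i =>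
        isClosed_eq (continuous_apply _) ((continuous_apply _).add continuous_const)
    have c2 : IsClosed {x : ℤ → ℝ | x 0 ∈ Set.Icc (0:ℝ) 1} :=
      IsClosed.preimage (continuous_apply 0) isClosed_Icc
    have c3 : IsClosed {x : ℤ → ℝ | ∀ i, x i ∈ Set.Icc (lin i - D) (lin i + D)} := by
      have : {x : ℤ → ℝ | ∀ i, x i ∈ Set.Icc (lin i - D) (lin i + D)}
          = ⋂ i : ℤ, {x : ℤ → ℝ | x i ∈ Set.Icc (lin i - D) (lin i + D)} := by
        ext x; simp [Set.mem_iInter]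
      rw [this]
      exact isClosed_iInter fun i => IsClosed.preimage (continuous_apply i) isClosed_Icc
    have : S = ({x : ℤ → ℝ | Per p q x} ∩ {x | x 0 ∈ Set.Icc (0:ℝ) 1})
        ∩ {x : ℤ → ℝ | ∀ i, x i ∈ Set.Icc (lin i - D) (lin i + D)} := by
      ext x; simp [hS, Set.mem_inter_iff]; tauto
    rw [this]
    exact ((c1.inter c2).inter c3)
  have hSc : IsCompact S := hTc.of_isClosed_subset hScl (fun x hx => hx.2.2)
  have lin0 : lin 0 = 0 := by rw [hlin]; norm_num
  have hlinS' : lin ∈ S := by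
    refine ⟨hlinper, ?_, fun i => ⟨by linarith, by linarith⟩⟩
    rw [lin0]
    exact ⟨le_refl _, zero_le_one⟩
  have hSne : S.Nonempty := ⟨lin, hlinS'⟩
  obtain ⟨xs, hxsS, hxsmin⟩ := hSc.exists_isMinOn hSne (act_continuous hcont q 0).continuousOn
  refine ⟨xs, hxsS.1, hxsS.2.1, ?_⟩
  -- global minimality
  intro y hy
  set n : ℤ := ⌊y 0⌋ with hn
  set y' : ℤ → ℝ := fun i => y i + (-n : ℤ) with hy'
  have hy'per : Per p q y' := by
    intro i; rw [hy']; simp only; rw [hy i]; ring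
  have hFy' : act h q 0 y' = act h q 0 y := act_translate h1 q 0 y (-n)
  have ey'0 : y' 0 = y 0 - (n:ℝ) := by rw [hy']; push_cast; ring
  have hy'0 : y' 0 ∈ Set.Icc (0:ℝ) 1 := by
    have f1 : ((n:ℤ):ℝ) ≤ y 0 := by rw [hn]; exact_mod_cast Int.floor_le (y 0)
    have f2 : y 0 < ((n:ℤ):ℝ) + 1 := by rw [hn]; exact_mod_cast Int.lt_floor_add_one (y 0)
    rw [ey'0]
    exact ⟨by linarith, by linarith⟩
  have hlinS := hlinS'
  have hLmin : act h q 0 xs ≤ L := hxsmin hlinS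
  by_cases hall : ∀ i ∈ Finset.Ico (0:ℤ) (q:ℤ), |y' (i+1) - y' i| ≤ B
  · -- all gaps small: y' lies in S
    have hstep : ∀ nn : ℕ, (nn:ℤ) ≤ q → |y' nn - y' 0| ≤ (nn:ℝ) * B := by
      intro nn
      induction nn with
      | zero => simp
      | succ m ih =>
        intro hm
        have hmq : (m:ℤ) ∈ Finset.Ico (0:ℤ) (q:ℤ) := by
          simp only [Finset.mem_Ico]
          omega
        have hg := hall _ hmq
        have hi := ih (by push_cast at hm ⊢; omega)
        have htri : |y' ((m:ℤ)+1) - y' 0| ≤ |y' ((m:ℤ)+1) - y' m| + |y' m - y' 0| :=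
          abs_sub_le _ _ _
        have hcast : ((m+1 : ℕ) : ℤ) = (m:ℤ) + 1 := by push_cast; ring
        rw [hcast]
        push_cast
        linarith [htri, hg, hi]
    have hbase : ∀ i : ℤ, 0 ≤ i → i ≤ q → |y' i - lin i| ≤ D := by
      intro i h0 hiq
      have hnn : ((i.toNat : ℕ) : ℤ) = i := Int.toNat_of_nonneg h0
      have h1' : |y' i - y' 0| ≤ (i:ℝ) * B := by
        have hst := hstep i.toNat (by omega)
        rw [hnn] at hst
        have hco : ((i.toNat:ℕ):ℝ) = (i:ℝ) := by exact_mod_cast congrArg (Int.cast : ℤ → ℝ) hnn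
        rwa [hco] at hst
      have hy'0abs : |y' 0| ≤ 1 := by
        rw [abs_le]; exact ⟨by linarith [hy'0.1], hy'0.2⟩
      have hiB : (i:ℝ) * B ≤ (q:ℝ) * B := by
        apply mul_le_mul_of_nonneg_right _ (by linarith)
        exact_mod_cast hiq
      have hlini : |lin i| ≤ |(p:ℝ)| := by
        rw [hlin]
        simp only
        rw [abs_div, abs_mul]
        rw [abs_of_nonneg (show (0:ℝ) ≤ (q:ℝ) by positivity)]
        rw [div_le_iff₀ (by positivity : (0:ℝ) < (q:ℝ))]
        rw [mul_comm]
        apply mul_le_mul_of_nonneg_left _ (abs_nonneg _)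
        rw [abs_of_nonneg (show (0:ℝ) ≤ (i:ℝ) by exact_mod_cast h0)]
        exact_mod_cast hiq
      have : |y' i - lin i| ≤ |y' i - y' 0| + |y' 0| + |lin i| := by
        have t1 : |y' i - lin i| ≤ |y' i - y' 0| + |y' 0 - lin i| := abs_sub_le _ _ _
        have t2 : |y' 0 - lin i| ≤ |y' 0| + |lin i| := abs_sub _ _
        linarith
      rw [hD]
      linarith
    have hgen : ∀ i : ℤ, |y' i - lin i| ≤ D := by
      intro i
      set r : ℤ := i % q with hr
      set t : ℤ := i / q with ht
      have hdec : r + t * (q:ℤ) = i := by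
        rw [hr, ht, mul_comm]
        exact Int.emod_add_mul_ediv i q
      have e1 : y' i = y' r + t * p := by
        rw [← hdec]
        exact per_shift hy'per t r
      have e2 : lin i = lin r + t * p := by
        rw [← hdec, hlin]
        simp only
        push_cast
        field_simp
      rw [e1, e2]
      have hrq : 0 ≤ r ∧ r < q := ⟨Int.emod_nonneg i (by positivity), Int.emod_lt_of_pos i (by exact_mod_cast hq)⟩
      have := hbase r hrq.1 (le_of_lt hrq.2)
      convert this using 2
      ring
    have hy'S : y' ∈ S := by
      refine ⟨hy'per, hy'0, fun i => ?_⟩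
      have := hgen i
      rw [abs_le] at this
      exact ⟨by linarith [this.1], by linarith [this.2]⟩
    calc act h q 0 xs ≤ act h q 0 y' := hxsmin hy'S
    _ = act h q 0 y := hFy'
  · push_neg at hall
    obtain ⟨i0, hi0mem, hi0⟩ := hall
    have key : M ≤ h (y' i0) (y' (i0+1)) := by
      have e : y' (i0+1) = y' i0 + (y' (i0+1) - y' i0) := by ring
      rw [e]
      exact hR _ _ (le_trans hBR (le_of_lt hi0))
    have hsum : M + ((q:ℝ) - 1) * c ≤ act h q 0 y' := by
      unfold act
      rw [zero_add]
      set f : ℤ → ℝ := fun i => h (y' i) (y' (i+1)) with hf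
      have e1 : f i0 + ∑ i ∈ (Finset.Ico (0:ℤ) (q:ℤ)).erase i0, f i
          = ∑ i ∈ Finset.Ico (0:ℤ) (q:ℤ), f i := Finset.add_sum_erase _ f hi0mem
      have e2 : ((Finset.Ico (0:ℤ) (q:ℤ)).erase i0).card = q - 1 := by
        rw [Finset.card_erase_of_mem hi0mem, Int.card_Ico]
        simp
      have e3 : ∀ i ∈ (Finset.Ico (0:ℤ) (q:ℤ)).erase i0, c ≤ f i := fun i _ => hc _ _
      have e4 : (((Finset.Ico (0:ℤ) (q:ℤ)).erase i0).card : ℝ) * c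
          ≤ ∑ i ∈ (Finset.Ico (0:ℤ) (q:ℤ)).erase i0, f i := by
        have := Finset.card_nsmul_le_sum _ f c e3
        rwa [nsmul_eq_mul] at this
      rw [e2] at e4
      have e5 : ((q - 1 : ℕ) : ℝ) = (q:ℝ) - 1 := by
        have : 1 ≤ q := hq
        push_cast [this]
        ring
      rw [e5] at e4
      have : M ≤ f i0 := key
      linarith [e1, e4]
    have hML : M + ((q:ℝ) - 1) * c = L + 1 := by rw [hM]; ring
    rw [← hFy']
    linarith [hsum, hLmin]

lemma sum_Ico_split (f : ℤ → ℝ) {a b c : ℤ} (hab : a ≤ b) (hbc : b ≤ c) :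
    ∑ i ∈ Finset.Ico a c, f i = (∑ i ∈ Finset.Ico a b, f i) + ∑ i ∈ Finset.Ico b c, f i := by
  rw [← Finset.Ico_union_Ico_eq_Ico hab hbc,
    Finset.sum_union (Finset.Ico_disjoint_Ico_consecutive a b c)]

/-- Periodic minimizers minimize every segment of length ≤ q. -/
lemma per_min_segment (h1 : CondH1 h) {p : ℤ} {q : ℕ} (hq : 0 < q) {x : ℤ → ℝ}
    (hxper : Per p q x) (hxmin : ∀ y, Per p q y → act h q 0 x ≤ act h q 0 y)
    {j k : ℤ} (hjk : j < k) (hkq : k - j ≤ q) (y : ℤ → ℝ) (hyj : y j = x j) (hyk : y k = x k) :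
    ∑ i ∈ Finset.Ico j k, h (x i) (x (i+1)) ≤ ∑ i ∈ Finset.Ico j k, h (y i) (y (i+1)) := by
  have hq0 : (q:ℤ) ≠ 0 := by positivity
  have hqpos : (0:ℤ) < q := by positivity
  set yext : ℤ → ℝ := fun i => if j ≤ i ∧ i ≤ k then y i else x i with hyext
  set z : ℤ → ℝ := fun i => yext (j + (i - j) % q) + (((i - j) / q : ℤ) : ℝ) * p with hz
  have hyeval : ∀ i, yext i = if j ≤ i ∧ i ≤ k then y i else x i := fun i => rfl
  have hyextj : yext j = x j := by
    rw [hyeval, if_pos (⟨le_refl j, le_of_lt hjk⟩ : j ≤ j ∧ j ≤ k)]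
    exact hyj
  have hyextjq : yext (j + q) = x (j + q) := by
    rw [hyeval]
    by_cases hkjq : k = j + q
    · rw [if_pos (⟨by omega, by omega⟩ : j ≤ j + (q:ℤ) ∧ j + (q:ℤ) ≤ k), ← hkjq, hyk, hkjq]
    · rw [if_neg (by omega)]
  have hzper : Per p q z := by
    intro i
    rw [hz]
    simp only
    have e1 : (i + (q:ℤ) - j) % q = (i - j) % q := by
      have e : i + (q:ℤ) - j = (i - j) + (q:ℤ) * 1 := by ring
      rw [e, Int.add_mul_emod_self_left]
    have e2 : (i + (q:ℤ) - j) / q = (i - j) / q + 1 := by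
      have e : i + (q:ℤ) - j = (i - j) + (q:ℤ) * 1 := by ring
      rw [e, Int.add_mul_ediv_left _ _ hq0]
    rw [e1, e2]
    push_cast
    ring
  have hzag : ∀ i, j ≤ i → i ≤ j + q → z i = yext i := by
    intro i hji hijq
    rcases lt_or_eq_of_le hijq with hlt | heq
    · rw [hz]
      simp only
      rw [Int.emod_eq_of_lt (by omega) (by omega), Int.ediv_eq_zero_of_lt (by omega) (by omega)]
      push_cast
      rw [show j + (i - j) = i by ring]
      ring
    · subst heq
      rw [hz]
      simp only
      rw [show j + (q:ℤ) - j = (q:ℤ) by ring, Int.emod_self, Int.ediv_self hq0]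
      rw [add_zero, hyextj, hyextjq, hxper j]
      push_cast
      ring
  have hactz : act h q j z = ∑ i ∈ Finset.Ico j (j + (q:ℤ)), h (yext i) (yext (i+1)) := by
    unfold act
    apply Finset.sum_congr rfl
    intro i hi
    rw [Finset.mem_Ico] at hi
    rw [hzag i hi.1 (by omega), hzag (i+1) (by omega) (by omega)]
  have hxz : act h q j x ≤ act h q j z := by
    rw [act_window h1 hxper, act_window h1 hzper]
    exact hxmin z hzper
  have hsplitx : act h q j x = (∑ i ∈ Finset.Ico j k, h (x i) (x (i+1)))
      + ∑ i ∈ Finset.Ico k (j + (q:ℤ)), h (x i) (x (i+1)) := by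
    unfold act
    exact sum_Ico_split (fun i => h (x i) (x (i+1))) (le_of_lt hjk)
      (show k ≤ j + (q:ℤ) by omega)
  have hsplitz : act h q j z = (∑ i ∈ Finset.Ico j k, h (y i) (y (i+1)))
      + ∑ i ∈ Finset.Ico k (j + (q:ℤ)), h (x i) (x (i+1)) := by
    rw [hactz, sum_Ico_split (fun i => h (yext i) (yext (i+1))) (le_of_lt hjk)
      (show k ≤ j + (q:ℤ) by omega)]
    congr 1
    · apply Finset.sum_congr rfl
      intro i hi
      rw [Finset.mem_Ico] at hi
      have e1 : yext i = y i := by rw [hyeval]; exact if_pos ⟨hi.1, le_of_lt hi.2⟩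
      have e2 : yext (i+1) = y (i+1) := by rw [hyeval]; exact if_pos ⟨by omega, by omega⟩
      rw [e1, e2]
    · apply Finset.sum_congr rfl
      intro i hi
      rw [Finset.mem_Ico] at hi
      have e1 : yext i = x i := by
        rcases eq_or_lt_of_le hi.1 with heq | hlt
        · rw [← heq, hyeval, if_pos (⟨by omega, le_refl k⟩ : j ≤ k ∧ k ≤ k)]
          exact hyk
        · rw [hyeval]; exact if_neg (by omega)
      have e2 : yext (i+1) = x (i+1) := by rw [hyeval]; exact if_neg (by omega)
      rw [e1, e2]
  linarith [hxz, hsplitx, hsplitz]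

/-- Periodic minimizers satisfy the triple minimality at every site (needs q ≥ 2). -/
lemma per_min_triple (h1 : CondH1 h) {p : ℤ} {q : ℕ} (hq : 2 ≤ q) {x : ℤ → ℝ}
    (hxper : Per p q x) (hxmin : ∀ y, Per p q y → act h q 0 x ≤ act h q 0 y) (i : ℤ) :
    MinTriple h (x (i-1)) (x i) (x (i+1)) := by
  intro m
  set y : ℤ → ℝ := fun t => if t = i then m else x t with hy
  have hyj : y (i-1) = x (i-1) := by rw [hy]; exact if_neg (by omega)
  have hyk : y (i+1) = x (i+1) := by rw [hy]; exact if_neg (by omega)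
  have := per_min_segment h1 (by omega) hxper hxmin (show i-1 < i+1 by omega)
    (by push_cast; omega) y hyj hyk
  have hpair : ∀ f : ℤ → ℝ, ∑ t ∈ Finset.Ico (i-1) (i+1), f t = f (i-1) + f i := by
    intro f
    have e1 : ∑ t ∈ Finset.Ico (i-1) (i+1), f t = (∑ t ∈ Finset.Ico (i-1) i, f t) + f i := by
      have : Finset.Ico (i-1) (i+1) = insert i (Finset.Ico (i-1) i) := by
        ext t; simp only [Finset.mem_Ico, Finset.mem_insert]; omega
      rw [this, Finset.sum_insert (by simp)]
      ring
    have e2 : ∑ t ∈ Finset.Ico (i-1) i, f t = f (i-1) := by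
      have : Finset.Ico (i-1) i = {i-1} := by
        ext t; simp only [Finset.mem_Ico, Finset.mem_singleton]; omega
      rw [this, Finset.sum_singleton]
    rw [e1, e2]
  rw [hpair, hpair] at this
  rw [show i - 1 + 1 = i by ring] at this
  have hyi : y i = m := by rw [hy]; exact if_pos rfl
  rw [hyj, hyk, hyi] at this
  exact this

lemma bond_minmax (h3 : CondH3 h) (a1 b1 a2 b2 : ℝ) :
    h (min a1 b1) (min a2 b2) + h (max a1 b1) (max a2 b2) ≤ h a1 a2 + h b1 b2 := by
  rcases le_total a1 b1 with c1 | c1 <;> rcases le_total a2 b2 with c2 | c2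
  · rw [min_eq_left c1, min_eq_left c2, max_eq_right c1, max_eq_right c2]
  · rw [min_eq_left c1, min_eq_right c2, max_eq_right c1, max_eq_left c2]
    rcases eq_or_lt_of_le c1 with e1 | l1
    · simp only [← e1]; linarith
    rcases eq_or_lt_of_le c2 with e2 | l2
    · simp only [← e2]; linarith
    exact le_of_lt (h3 a1 b1 b2 a2 l1 l2)
  · rw [min_eq_right c1, min_eq_left c2, max_eq_left c1, max_eq_right c2]
    rcases eq_or_lt_of_le c1 with e1 | l1
    · simp only [← e1]; linarith
    rcases eq_or_lt_of_le c2 with e2 | l2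
    · simp only [← e2]; linarith
    have := h3 b1 a1 a2 b2 l1 l2
    linarith
  · rw [min_eq_right c1, min_eq_right c2, max_eq_left c1, max_eq_left c2]
    linarith

lemma bond_minmax_strict (h3 : CondH3 h) (a1 b1 a2 b2 : ℝ)
    (hcross : (a1 - b1) * (a2 - b2) < 0) :
    h (min a1 b1) (min a2 b2) + h (max a1 b1) (max a2 b2) < h a1 a2 + h b1 b2 := by
  rcases mul_neg_iff.mp hcross with ⟨hp, hn⟩ | ⟨hn, hp⟩
  · -- a1 > b1, a2 < b2
    have l1 : b1 < a1 := by linarith [sub_pos.mp hp]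
    have l2 : a2 < b2 := by linarith [sub_neg.mp hn]
    rw [min_eq_right (le_of_lt l1), min_eq_left (le_of_lt l2),
      max_eq_left (le_of_lt l1), max_eq_right (le_of_lt l2)]
    have := h3 b1 a1 a2 b2 l1 l2
    linarith
  · -- a1 < b1, a2 > b2
    have l1 : a1 < b1 := by linarith [sub_neg.mp hn]
    have l2 : b2 < a2 := by linarith [sub_pos.mp hp]
    rw [min_eq_left (le_of_lt l1), min_eq_right (le_of_lt l2),
      max_eq_right (le_of_lt l1), max_eq_left (le_of_lt l2)]
    exact h3 a1 b1 b2 a2 l1 l2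

/-- Two periodic minimizers of the same type are ordered. -/
lemma ordered (h1 : CondH1 h) (h3 : CondH3 h) (h4 : CondH4 h)
    {p : ℤ} {q : ℕ} (hq : 2 ≤ q) {x y : ℤ → ℝ}
    (hxper : Per p q x) (hyper : Per p q y)
    (hxmin : ∀ z, Per p q z → act h q 0 x ≤ act h q 0 z)
    (hymin : ∀ z, Per p q z → act h q 0 y ≤ act h q 0 z) :
    (∀ i, x i = y i) ∨ (∀ i, y i < x i) ∨ (∀ i, x i < y i) := by
  have hq0 : 0 < q := by omega
  set u : ℤ → ℝ := fun i => min (x i) (y i) with hu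
  set v : ℤ → ℝ := fun i => max (x i) (y i) with hv
  have huper : Per p q u := by
    intro i; rw [hu]; simp only [hxper i, hyper i]
    rw [← min_add_add_right]
  have hvper : Per p q v := by
    intro i; rw [hv]; simp only [hxper i, hyper i]
    rw [← max_add_add_right]
  have hxy : act h q 0 x = act h q 0 y := le_antisymm (hxmin y hyper) (hymin x hxper)
  have hsum : act h q 0 u + act h q 0 v ≤ act h q 0 x + act h q 0 y := by
    unfold act
    rw [← Finset.sum_add_distrib, ← Finset.sum_add_distrib]
    apply Finset.sum_le_sum
    intro i _
    exact bond_minmax h3 (x i) (y i) (x (i+1)) (y (i+1))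
  have huv : act h q 0 u = act h q 0 x ∧ act h q 0 v = act h q 0 x := by
    have h1' := hxmin u huper
    have h2' := hxmin v hvper
    constructor <;> linarith
  have humin : ∀ z, Per p q z → act h q 0 u ≤ act h q 0 z := by
    intro z hz; rw [huv.1]; exact hxmin z hz
  have hvmin : ∀ z, Per p q z → act h q 0 v ≤ act h q 0 z := by
    intro z hz; rw [huv.2]; exact hxmin z hz
  -- no strict crossing on the fundamental window
  have hnocross0 : ∀ i ∈ Finset.Ico (0:ℤ) (q:ℤ),
      ¬ ((x i - y i) * (x (i+1) - y (i+1)) < 0) := by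
    intro i hi hcross
    have hstrict := bond_minmax_strict h3 (x i) (y i) (x (i+1)) (y (i+1)) hcross
    have hle : ∀ t ∈ Finset.Ico (0:ℤ) (q:ℤ),
        h (u t) (u (t+1)) + h (v t) (v (t+1)) ≤ h (x t) (x (t+1)) + h (y t) (y (t+1)) :=
      fun t _ => bond_minmax h3 (x t) (y t) (x (t+1)) (y (t+1))
    have hlt : ∑ t ∈ Finset.Ico (0:ℤ) (q:ℤ), (h (u t) (u (t+1)) + h (v t) (v (t+1)))
        < ∑ t ∈ Finset.Ico (0:ℤ) (q:ℤ), (h (x t) (x (t+1)) + h (y t) (y (t+1))) :=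
      Finset.sum_lt_sum hle ⟨i, hi, hstrict⟩
    rw [Finset.sum_add_distrib, Finset.sum_add_distrib] at hlt
    have e1 : ∑ t ∈ Finset.Ico (0:ℤ) (q:ℤ), h (u t) (u (t+1)) = act h q 0 u := by
      unfold act; rw [zero_add]
    have e2 : ∑ t ∈ Finset.Ico (0:ℤ) (q:ℤ), h (v t) (v (t+1)) = act h q 0 v := by
      unfold act; rw [zero_add]
    have e3 : ∑ t ∈ Finset.Ico (0:ℤ) (q:ℤ), h (x t) (x (t+1)) = act h q 0 x := by
      unfold act; rw [zero_add]
    have e4 : ∑ t ∈ Finset.Ico (0:ℤ) (q:ℤ), h (y t) (y (t+1)) = act h q 0 y := by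
      unfold act; rw [zero_add]
    rw [e1, e2, e3, e4] at hlt
    linarith [huv.1, huv.2, hxy]
  have hdper : ∀ i : ℤ, x (i + q) - y (i + q) = x i - y i := by
    intro i; rw [hxper i, hyper i]; ring
  have hdshift : ∀ (t i : ℤ), x (i + t * q) - y (i + t * q) = x i - y i := by
    intro t i
    rw [per_shift hxper t i, per_shift hyper t i]; ring
  have hnocross : ∀ i : ℤ, ¬ ((x i - y i) * (x (i+1) - y (i+1)) < 0) := by
    intro i
    have hdec : i % q + (i / q) * q = i := by rw [mul_comm]; exact Int.emod_add_mul_ediv i q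
    have hmem : i % q ∈ Finset.Ico (0:ℤ) (q:ℤ) := by
      rw [Finset.mem_Ico]
      exact ⟨Int.emod_nonneg i (by positivity), Int.emod_lt_of_pos i (by exact_mod_cast hq0)⟩
    have e1 := hdshift (i / q) (i % q)
    rw [hdec] at e1
    have e2 := hdshift (i / q) (i % q + 1)
    rw [show i % (q:ℤ) + 1 + (i / q) * q = i + 1 by omega] at e2
    rw [e1, e2]
    exact hnocross0 _ hmem
  -- zero propagation forward
  have hzf : ∀ i : ℤ, x i = y i → x (i+1) = y (i+1) := by
    intro i h0
    by_contra hne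
    have TX := per_min_triple h1 hq hxper hxmin i
    have TY := per_min_triple h1 hq hyper hymin i
    rw [← h0] at TY
    have hprod := h4 _ _ _ _ _ TX TY (Or.inr hne)
    rcases lt_or_gt_of_ne (sub_ne_zero.mpr hne) with hneg | hpos
    · -- x (i+1) < y (i+1), so x (i-1) > y (i-1); use max
      have hgt : y (i-1) < x (i-1) := by nlinarith [hprod]
      have TV := per_min_triple h1 hq hvper hvmin i
      have ev1 : v (i-1) = x (i-1) := max_eq_left (le_of_lt hgt)
      have ev2 : v i = x i := by rw [hv]; simp only; rw [h0, max_self]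
      have ev3 : v (i+1) = y (i+1) := max_eq_right (by linarith [sub_neg.mp hneg])
      rw [ev1, ev2, ev3] at TV
      have := h4 _ _ _ _ _ TX TV (Or.inr hne)
      simp at this
    · -- x (i+1) > y (i+1), so x (i-1) < y (i-1); use min
      have hlt : x (i-1) < y (i-1) := by nlinarith [hprod]
      have TU := per_min_triple h1 hq huper humin i
      have eu1 : u (i-1) = x (i-1) := min_eq_left (le_of_lt hlt)
      have eu2 : u i = x i := by rw [hu]; simp only; rw [h0, min_self]
      have eu3 : u (i+1) = y (i+1) := min_eq_right (by linarith [sub_pos.mp hpos])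
      rw [eu1, eu2, eu3] at TU
      have := h4 _ _ _ _ _ TX TU (Or.inr hne)
      simp at this
  -- zero propagation backward
  have hzb : ∀ i : ℤ, x i = y i → x (i-1) = y (i-1) := by
    intro i h0
    by_contra hne
    have h1' : x (i+1) = y (i+1) := hzf i h0
    have TX := per_min_triple h1 hq hxper hxmin i
    have TY := per_min_triple h1 hq hyper hymin i
    rw [← h0] at TY
    have hprod := h4 _ _ _ _ _ TX TY (Or.inl hne)
    rw [h1'] at hprod
    simp at hprod
  -- if equal somewhere, equal everywhere
  by_cases hex : ∃ i0 : ℤ, x i0 = y i0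
  · left
    obtain ⟨i0, hi0⟩ := hex
    have hup : ∀ n : ℕ, x (i0 + n) = y (i0 + n) := by
      intro n
      induction n with
      | zero => simpa using hi0
      | succ m ih =>
        have := hzf (i0 + m) ih
        have e : i0 + (m+1:ℕ) = (i0 + m) + 1 := by push_cast; ring
        rw [e]; exact this
    have hdown : ∀ n : ℕ, x (i0 - n) = y (i0 - n) := by
      intro n
      induction n with
      | zero => simpa using hi0
      | succ m ih =>
        have := hzb (i0 - m) ih
        have e : i0 - (m+1:ℕ) = (i0 - m) - 1 := by push_cast; ring
        rw [e]; exact this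
    intro i
    rcases le_total i0 i with hle | hle
    · have := hup (i - i0).toNat
      rwa [show i0 + ((i - i0).toNat : ℤ) = i by omega] at this
    · have := hdown (i0 - i).toNat
      rwa [show i0 - ((i0 - i).toNat : ℤ) = i by omega] at this
  · -- never equal: constant sign
    push_neg at hex
    have hsf : ∀ i : ℤ, y i < x i → y (i+1) < x (i+1) := by
      intro i hpos
      rcases lt_or_gt_of_ne (hex (i+1)) with hlt | hgt
      · exfalso
        exact hnocross i (by nlinarith)
      · exact hgt
    have hsb : ∀ i : ℤ, y i < x i → y (i-1) < x (i-1) := by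
      intro i hpos
      rcases lt_or_gt_of_ne (hex (i-1)) with hlt | hgt
      · exfalso
        apply hnocross (i-1)
        rw [show i - 1 + 1 = i by ring]
        nlinarith
      · exact hgt
    rcases lt_or_gt_of_ne (hex 0) with hneg0 | hpos0
    · -- x 0 < y 0 everywhere x < y
      right; right
      have hsf' : ∀ i : ℤ, x i < y i → x (i+1) < y (i+1) := by
        intro i hpos
        rcases lt_or_gt_of_ne (hex (i+1)) with hlt | hgt
        · exact hlt
        · exfalso; exact hnocross i (by nlinarith)
      have hsb' : ∀ i : ℤ, x i < y i → x (i-1) < y (i-1) := by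
        intro i hpos
        rcases lt_or_gt_of_ne (hex (i-1)) with hlt | hgt
        · exact hlt
        · exfalso
          apply hnocross (i-1)
          rw [show i - 1 + 1 = i by ring]
          nlinarith
      intro i
      rcases le_total 0 i with hle | hle
      · have : ∀ n : ℕ, x ((0:ℤ) + n) < y ((0:ℤ) + n) := by
          intro n
          induction n with
          | zero => simpa using hneg0
          | succ m ih =>
            have := hsf' ((0:ℤ) + m) ih
            rwa [show (0:ℤ) + ((m+1:ℕ) : ℤ) = ((0:ℤ) + m) + 1 by push_cast; ring]
        have := this i.toNat
        rwa [show (0:ℤ) + (i.toNat : ℤ) = i by omega] at this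
      · have : ∀ n : ℕ, x ((0:ℤ) - n) < y ((0:ℤ) - n) := by
          intro n
          induction n with
          | zero => simpa using hneg0
          | succ m ih =>
            have := hsb' ((0:ℤ) - m) ih
            rwa [show (0:ℤ) - ((m+1:ℕ) : ℤ) = ((0:ℤ) - m) - 1 by push_cast; ring]
        have := this (-i).toNat
        rwa [show (0:ℤ) - ((-i).toNat : ℤ) = i by omega] at this
    · -- y 0 < x 0
      right; left
      intro i
      rcases le_total 0 i with hle | hle
      · have : ∀ n : ℕ, y ((0:ℤ) + n) < x ((0:ℤ) + n) := by
          intro n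
          induction n with
          | zero => simpa using hpos0
          | succ m ih =>
            have := hsf ((0:ℤ) + m) ih
            rwa [show (0:ℤ) + ((m+1:ℕ) : ℤ) = ((0:ℤ) + m) + 1 by push_cast; ring]
        have := this i.toNat
        rwa [show (0:ℤ) + (i.toNat : ℤ) = i by omega] at this
      · have : ∀ n : ℕ, y ((0:ℤ) - n) < x ((0:ℤ) - n) := by
          intro n
          induction n with
          | zero => simpa using hpos0
          | succ m ih =>
            have := hsb ((0:ℤ) - m) ih
            rwa [show (0:ℤ) - ((m+1:ℕ) : ℤ) = ((0:ℤ) - m) - 1 by push_cast; ring]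
        have := this (-i).toNat
        rwa [show (0:ℤ) - ((-i).toNat : ℤ) = i by omega] at this

/-- comparison with integer translates -/
lemma translate_comparison (h1 : CondH1 h) (h3 : CondH3 h) (h4 : CondH4 h)
    {p : ℤ} {q : ℕ} (hq : 2 ≤ q) {x : ℤ → ℝ} (hxper : Per p q x)
    (hxmin : ∀ z, Per p q z → act h q 0 x ≤ act h q 0 z) (a b : ℤ) :
    (a * p ≤ q * b → ∀ i, x i ≤ x (i - a) + b) ∧
    (q * b ≤ a * p → ∀ i, x (i - a) + b ≤ x i) := by
  have hq0 : 0 < q := by omega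
  set y : ℤ → ℝ := fun i => x (i - a) + (b:ℝ) with hy
  have hyper : Per p q y := by
    intro i
    rw [hy]
    simp only
    rw [show i + (q:ℤ) - a = (i - a) + q by ring, hxper]
    ring
  have hacty : act h q 0 y = act h q 0 x := by
    have e1 : act h q 0 y = ∑ i ∈ Finset.Ico (0:ℤ) (q:ℤ), h (x (i - a)) (x ((i - a) + 1)) := by
      unfold act
      rw [zero_add]
      apply Finset.sum_congr rfl
      intro i _
      rw [hy]
      simp only
      rw [show i + 1 - a = (i - a) + 1 by ring]
      exact h1Z h1 b _ _
    have e2 : act h q (-a) x = ∑ i ∈ Finset.Ico (0:ℤ) (q:ℤ), h (x (i - a)) (x ((i - a) + 1)) := by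
      unfold act
      have hmap : Finset.Ico (-a) (-a + (q:ℤ))
          = (Finset.Ico (0:ℤ) (q:ℤ)).map (addRightEmbedding (-a)) := by
        rw [Finset.map_add_right_Ico]
        congr 1 <;> ring
      rw [hmap, Finset.sum_map]
      apply Finset.sum_congr rfl
      intro i _
      have e : addRightEmbedding (-a) i = i - a := by
        simp [addRightEmbedding, sub_eq_add_neg]
      rw [e]
    rw [e1, ← e2, act_window h1 hxper]
  have hymin : ∀ z, Per p q z → act h q 0 y ≤ act h q 0 z := by
    intro z hz
    rw [hacty]
    exact hxmin z hz
  have hsumd : ∑ i ∈ Finset.Ico (0:ℤ) (q:ℤ), (x i - y i) = ((a * p : ℤ) : ℝ) - ((q * b : ℤ) : ℝ) := by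
    have e1 : ∑ i ∈ Finset.Ico (0:ℤ) (q:ℤ), (x i - y i)
        = (∑ i ∈ Finset.Ico (0:ℤ) (q:ℤ), x i) - ∑ i ∈ Finset.Ico (0:ℤ) (q:ℤ), y i :=
      Finset.sum_sub_distrib _ _
    have e2 : ∑ i ∈ Finset.Ico (0:ℤ) (q:ℤ), y i
        = (∑ i ∈ Finset.Ico (0:ℤ) (q:ℤ), x (i - a)) + (q:ℝ) * b := by
      rw [hy]
      rw [Finset.sum_add_distrib]
      congr 1
      rw [Finset.sum_const, Int.card_Ico]
      simp
    have e3 : ∑ i ∈ Finset.Ico (0:ℤ) (q:ℤ), x (i - a)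
        = (∑ i ∈ Finset.Ico (0:ℤ) (q:ℤ), x i) + (-a : ℤ) * p := by
      have hmap : Finset.Ico (-a) (-a + (q:ℤ))
          = (Finset.Ico (0:ℤ) (q:ℤ)).map (addRightEmbedding (-a)) := by
        rw [Finset.map_add_right_Ico]
        congr 1 <;> ring
      have := coord_sum_shift hxper (-a)
      rw [hmap, Finset.sum_map] at this
      have e : ∀ i : ℤ, addRightEmbedding (-a) i = i - a := by
        intro i
        simp [addRightEmbedding, sub_eq_add_neg]
      simp only [e] at this
      convert this using 2
    rw [e1, e2, e3]
    push_cast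
    ring
  have hIcoNe : (Finset.Ico (0:ℤ) (q:ℤ)).Nonempty := by
    rw [Finset.nonempty_Ico]
    exact_mod_cast hq0
  rcases ordered h1 h3 h4 hq hxper hyper hxmin hymin with hall | hall | hall
  · constructor <;> intro _ i <;> [exact le_of_eq (hall i); exact le_of_eq (hall i).symm]
  · -- ∀ i, y i < x i
    constructor
    · intro hab i
      exfalso
      have hpos : 0 < ∑ i ∈ Finset.Ico (0:ℤ) (q:ℤ), (x i - y i) :=
        Finset.sum_pos (fun i _ => sub_pos.mpr (hall i)) hIcoNe
      rw [hsumd] at hpos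
      have : ((a*p : ℤ):ℝ) ≤ ((q*b : ℤ):ℝ) := by exact_mod_cast hab
      linarith
    · intro _ i
      exact le_of_lt (hall i)
  · constructor
    · intro _ i
      exact le_of_lt (hall i)
    · intro hab i
      exfalso
      have hneg : ∑ i ∈ Finset.Ico (0:ℤ) (q:ℤ), (x i - y i) < 0 := by
        have := Finset.sum_pos (f := fun i => y i - x i) (fun i _ => sub_pos.mpr (hall i)) hIcoNe
        have e : ∑ i ∈ Finset.Ico (0:ℤ) (q:ℤ), (y i - x i)
            = - ∑ i ∈ Finset.Ico (0:ℤ) (q:ℤ), (x i - y i) := by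
          rw [← Finset.sum_neg_distrib]
          apply Finset.sum_congr rfl
          intro i _
          ring
        rw [e] at this
        linarith
      rw [hsumd] at hneg
      have : ((q*b : ℤ):ℝ) ≤ ((a*p : ℤ):ℝ) := by exact_mod_cast hab
      linarith

/-- Birkhoff-type a priori bound for periodic minimizers -/
lemma birkhoff (h1 : CondH1 h) (h3 : CondH3 h) (h4 : CondH4 h)
    {p : ℤ} {q : ℕ} (hq : 2 ≤ q) {x : ℤ → ℝ} (hxper : Per p q x)
    (hxmin : ∀ z, Per p q z → act h q 0 x ≤ act h q 0 z) (i : ℤ) :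
    |x i - x 0 - (i:ℝ) * p / q| ≤ 1 := by
  have hq0 : (0:ℝ) < q := by positivity
  -- upper bound
  have hup : x i - x 0 ≤ (i:ℝ) * p / q + 1 := by
    set b : ℤ := ⌈(i:ℝ) * p / q⌉ with hb
    have hab : i * p ≤ q * b := by
      have h1' : (i:ℝ) * p / q ≤ (b:ℝ) := Int.le_ceil _
      have h2' : ((i * p : ℤ) : ℝ) ≤ ((q * b : ℤ) : ℝ) := by
        push_cast
        rw [div_le_iff₀ hq0] at h1'
        linarith
      exact_mod_cast h2'
    have := (translate_comparison h1 h3 h4 hq hxper hxmin i b).1 hab i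
    rw [sub_self] at this
    have hbb : (b:ℝ) < (i:ℝ) * p / q + 1 := Int.ceil_lt_add_one _
    linarith
  -- lower bound
  have hlo : (i:ℝ) * p / q - 1 ≤ x i - x 0 := by
    set b : ℤ := ⌊(i:ℝ) * p / q⌋ with hb
    have hab : q * b ≤ i * p := by
      have h1' : (b:ℝ) ≤ (i:ℝ) * p / q := Int.floor_le _
      have h2' : ((q * b : ℤ) : ℝ) ≤ ((i * p : ℤ) : ℝ) := by
        push_cast
        rw [le_div_iff₀ hq0] at h1'
        linarith
      exact_mod_cast h2'
    have := (translate_comparison h1 h3 h4 hq hxper hxmin i b).2 hab i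
    rw [sub_self] at this
    have hbb : (i:ℝ) * p / q - 1 < (b:ℝ) := by linarith [Int.sub_one_lt_floor ((i:ℝ) * p / q)]
    linarith
  rw [abs_le]
  constructor <;> linarith

theorem main
    (hcont : Continuous (Function.uncurry h))
    (h1 : CondH1 h) (h2 : CondH2 h) (h3 : CondH3 h) (h4 : CondH4 h) (α : ℝ) :
    ∃ x : ℤ → ℝ, MinimalConfig h x ∧ Tendsto (fun n : ℕ => x n / n) atTop (𝓝 α) := by
  -- sequence of periodic minimizers with rotation numbers ⌊qα⌋/q, q = m+2
  set Q : ℕ → ℕ := fun m => m + 2 with hQ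
  set P : ℕ → ℤ := fun m => ⌊(Q m : ℝ) * α⌋ with hP
  have hex : ∀ m : ℕ, ∃ x : ℤ → ℝ, Per (P m) (Q m) x ∧ x 0 ∈ Set.Icc (0:ℝ) 1 ∧
      ∀ y, Per (P m) (Q m) y → act h (Q m) 0 x ≤ act h (Q m) 0 y :=
    fun m => exists_per_min hcont h1 h2 (P m) (Q m) (by simp only [hQ]; omega)
  choose X hXper hX0 hXmin using hex
  set ρ : ℕ → ℝ := fun m => (P m : ℝ) / (Q m) with hρ
  have hQpos : ∀ m : ℕ, (0:ℝ) < (Q m : ℝ) := fun m => by positivity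
  have hρerr : ∀ m : ℕ, |ρ m - α| ≤ 1 / (Q m : ℝ) := by
    intro m
    have f1 : ((P m : ℤ):ℝ) ≤ (Q m : ℝ) * α := Int.floor_le _
    have f2 : (Q m : ℝ) * α - 1 < ((P m : ℤ):ℝ) := by
      exact_mod_cast Int.sub_one_lt_floor ((Q m : ℝ) * α)
    have e : ρ m - α = (((P m : ℤ):ℝ) - (Q m : ℝ) * α) / (Q m : ℝ) := by
      rw [hρ]
      rw [sub_div, mul_div_cancel_left₀ _ (hQpos m).ne']
    rw [e, abs_div, abs_of_pos (hQpos m)]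
    have habs : |((P m : ℤ):ℝ) - (Q m : ℝ) * α| ≤ 1 := abs_le.mpr ⟨by linarith, by linarith⟩
    gcongr
  have hρbd : ∀ m : ℕ, |ρ m| ≤ |α| + 1 := by
    intro m
    have he := hρerr m
    have h1' : 1 / (Q m : ℝ) ≤ 1 := by
      rw [div_le_one (hQpos m)]
      exact_mod_cast (by simp only [hQ]; omega : 1 ≤ Q m)
    have h2' : |ρ m| - |α| ≤ |ρ m - α| := abs_sub_abs_le_abs_sub _ _
    linarith
  have hbk : ∀ m : ℕ, ∀ i : ℤ, |X m i - X m 0 - (i:ℝ) * (P m) / (Q m)| ≤ 1 :=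
    fun m => birkhoff h1 h3 h4 (by simp only [hQ]; omega) (hXper m) (hXmin m)
  -- coordinatewise bounds
  set C : ℤ → ℝ := fun i => |(i:ℝ)| * (|α| + 1) + 2 with hC
  have hXbd : ∀ m : ℕ, ∀ i : ℤ, X m i ∈ Set.Icc (-(C i)) (C i) := by
    intro m i
    have hb := hbk m i
    have h0 := hX0 m
    have e : (i:ℝ) * (P m) / (Q m) = (i:ℝ) * ρ m := by
      rw [hρ]; ring
    rw [e] at hb
    have hiρ : |(i:ℝ) * ρ m| ≤ |(i:ℝ)| * (|α| + 1) := by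
      rw [abs_mul]
      apply mul_le_mul_of_nonneg_left (hρbd m) (abs_nonneg _)
    rw [abs_le] at hb hiρ
    have h01 : (0:ℝ) ≤ X m 0 := h0.1
    have h02 : X m 0 ≤ 1 := h0.2
    constructor
    · rw [hC]; simp only; nlinarith [hb.1, hiρ.1]
    · rw [hC]; simp only; nlinarith [hb.2, hiρ.2]
  -- compact product set
  have hTc : IsCompact (Set.univ.pi fun i : ℤ => Set.Icc (-(C i)) (C i)) :=
    isCompact_univ_pi fun i => isCompact_Icc
  have hXT : ∀ m : ℕ, X m ∈ Set.univ.pi fun i : ℤ => Set.Icc (-(C i)) (C i) := by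
    intro m
    rw [Set.mem_univ_pi]
    exact fun i => hXbd m i
  obtain ⟨x, hxT, φ, hφ, hconv⟩ := hTc.tendsto_subseq hXT
  have hcoord : ∀ i : ℤ, Tendsto (fun m => X (φ m) i) atTop (𝓝 (x i)) := by
    intro i
    have := (continuous_apply i).continuousAt (x := x) |>.tendsto.comp hconv
    exact this
  -- auxiliary: convergence of h-compositions
  have hcomp : ∀ (f g : ℕ → ℝ) (a b : ℝ), Tendsto f atTop (𝓝 a) → Tendsto g atTop (𝓝 b) →
      Tendsto (fun m => h (f m) (g m)) atTop (𝓝 (h a b)) := by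
    intro f g a b hf hg
    have : Tendsto (fun m => (f m, g m)) atTop (𝓝 (a, b)) := hf.prodMk_nhds hg
    exact (hcont.tendsto (a, b)).comp this
  refine ⟨x, ?_, ?_⟩
  · -- minimality
    intro j k hjk y hyj hyk
    set Ym : ℕ → ℤ → ℝ := fun m i => if i = j then X (φ m) j else if i = k then X (φ m) k else y i
      with hYm
    have hYconv : ∀ i : ℤ, Tendsto (fun m => Ym m i) atTop (𝓝 (y i)) := by
      intro i
      rw [hYm]
      by_cases hij : i = j
      · subst hij
        simp only [if_pos rfl]
        rw [hyj]
        exact hcoord i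
      · by_cases hik : i = k
        · subst hik
          simp only [if_neg hij, if_pos rfl]
          rw [hyk]
          exact hcoord i
        · simp only [if_neg hij, if_neg hik]
          exact tendsto_const_nhds
    have hSx : Tendsto (fun m => ∑ i ∈ Finset.Ico j k, h (X (φ m) i) (X (φ m) (i+1))) atTop
        (𝓝 (∑ i ∈ Finset.Ico j k, h (x i) (x (i+1)))) := by
      apply tendsto_finset_sum
      intro i _
      exact hcomp _ _ _ _ (hcoord i) (hcoord (i+1))
    have hSy : Tendsto (fun m => ∑ i ∈ Finset.Ico j k, h (Ym m i) (Ym m (i+1))) atTop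
        (𝓝 (∑ i ∈ Finset.Ico j k, h (y i) (y (i+1)))) := by
      apply tendsto_finset_sum
      intro i _
      exact hcomp _ _ _ _ (hYconv i) (hYconv (i+1))
    apply le_of_tendsto_of_tendsto hSx hSy
    -- eventual inequality
    have hev : ∀ m : ℕ, (k - j ≤ (φ m + 2 : ℤ)) →
        (fun m => ∑ i ∈ Finset.Ico j k, h (X (φ m) i) (X (φ m) (i+1))) m
        ≤ (fun m => ∑ i ∈ Finset.Ico j k, h (Ym m i) (Ym m (i+1))) m := by
      intro m hm
      apply per_min_segment h1 (by simp only [hQ]; omega : 0 < Q (φ m)) (hXper (φ m)) (hXmin (φ m)) hjk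
      · simp only [hQ]
        push_cast
        omega
      · show (if j = j then X (φ m) j else if j = k then X (φ m) k else y j) = X (φ m) j
        rw [if_pos rfl]
      · show (if k = j then X (φ m) j else if k = k then X (φ m) k else y k) = X (φ m) k
        rw [if_neg (show k ≠ j by omega), if_pos rfl]
    rw [Filter.EventuallyLE]
    filter_upwards [Filter.eventually_atTop.mpr ⟨(k - j).toNat, fun m hm => hm⟩] with m hm
    apply hev
    have hφm : m ≤ φ m := hφ.le_apply
    omega
  · -- rotation number
    have hρφ : Tendsto (fun m => ρ (φ m)) atTop (𝓝 α) := by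
      have hz : Tendsto (fun m : ℕ => ρ (φ m) - α) atTop (𝓝 0) := by
        apply squeeze_zero_norm (a := fun m : ℕ => 1 / ((m:ℝ) + 1))
        · intro m
          have hb := hρerr (φ m)
          have hle : (m:ℝ) + 1 ≤ (Q (φ m) : ℝ) := by
            have hφm : m ≤ φ m := hφ.le_apply
            have : (m:ℕ) + 1 ≤ Q (φ m) := by simp only [hQ]; omega
            exact_mod_cast this
          have : 1 / (Q (φ m) : ℝ) ≤ 1 / ((m:ℝ) + 1) := by
            apply one_div_le_one_div_of_le (by positivity) hle
          calc ‖ρ (φ m) - α‖ = |ρ (φ m) - α| := rfl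
          _ ≤ 1 / (Q (φ m) : ℝ) := hb
          _ ≤ 1 / ((m:ℝ) + 1) := this
        · exact tendsto_one_div_add_atTop_nhds_zero_nat
      have := hz.add_const α
      simp only [zero_add, sub_add_cancel] at this
      exact this
    have hlim : ∀ i : ℤ, |x i - x 0 - (i:ℝ) * α| ≤ 1 := by
      intro i
      have hA : Tendsto (fun m => |X (φ m) i - X (φ m) 0 - (i:ℝ) * ρ (φ m)|) atTop
          (𝓝 (|x i - x 0 - (i:ℝ) * α|)) := by
        apply Tendsto.abs
        exact ((hcoord i).sub (hcoord 0)).sub (tendsto_const_nhds.mul hρφ)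
      apply le_of_tendsto hA
      apply Filter.Eventually.of_forall
      intro m
      have hb := hbk (φ m) i
      have e : (i:ℝ) * (P (φ m)) / (Q (φ m)) = (i:ℝ) * ρ (φ m) := by
        rw [hρ]; ring
      rw [e] at hb
      exact hb
    have hkey : ∀ n : ℕ, 1 ≤ n → ‖x n / n - α‖ ≤ (1 + |x 0|) / n := by
      intro n hn
      have hnpos : (0:ℝ) < (n:ℝ) := by positivity
      have e : x (n:ℤ) / (n:ℝ) - α = (x (n:ℤ) - (n:ℝ) * α) / (n:ℝ) := by
        field_simp
      rw [e]
      have hl := hlim (n:ℤ)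
      have hcast : (((n:ℤ)):ℝ) = (n:ℝ) := by push_cast; rfl
      rw [hcast] at hl
      have hnum : |x (n:ℤ) - (n:ℝ) * α| ≤ 1 + |x 0| := by
        have t1 : |x (n:ℤ) - (n:ℝ) * α| ≤ |x (n:ℤ) - x 0 - (n:ℝ) * α| + |x 0| := by
          have := abs_add_le (x (n:ℤ) - x 0 - (n:ℝ) * α) (x 0)
          rw [show x (n:ℤ) - x 0 - (n:ℝ) * α + x 0 = x (n:ℤ) - (n:ℝ) * α by ring] at this
          exact this
        linarith
      calc ‖(x (n:ℤ) - (n:ℝ) * α) / (n:ℝ)‖ = |x (n:ℤ) - (n:ℝ) * α| / (n:ℝ) := by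
            rw [norm_div]
            simp [abs_of_pos hnpos]
      _ ≤ (1 + |x 0|) / (n:ℝ) := by gcongr
    have hz : Tendsto (fun n : ℕ => x n / n - α) atTop (𝓝 0) := by
      apply squeeze_zero_norm' (a := fun n : ℕ => (1 + |x 0|) / (n:ℝ))
      · filter_upwards [Filter.eventually_atTop.mpr ⟨1, fun n hn => hn⟩] with n hn
        exact hkey n hn
      · exact tendsto_const_div_atTop_nhds_zero_nat _
    have := hz.add_const α
    simp only [zero_add, sub_add_cancel] at this
    exact this

end Bangert

/-- The rotation number is surjective on minimal configurations. -/
theorem rotation_number_surjective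
    (h : ℝ → ℝ → ℝ) (hcont : Continuous (Function.uncurry h))
    (h1 : CondH1 h) (h2 : CondH2 h) (h3 : CondH3 h) (h4 : CondH4 h) (α : ℝ) :
    ∃ x : ℤ → ℝ, MinimalConfig h x ∧ Tendsto (fun n : ℕ => x n / n) atTop (𝓝 α) :=
  Bangert.main hcont h1 h2 h3 h4 α
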